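/- Let R be a commutative ring equipped with an involutive ring automorphism r ↦ r̄, let n ≥ 1, let a, b ∈ R^n, and let λ ∈ R satisfy λ·λ̄ = 1. Set A = circ_λ(a) and B = circ_λ(b). Then B·(Ā)^T = circ_λ(v_0, v_1, …, v_{n−1}), where v_j = Θ(b, ā, j)[λ̄] for every j ∈ {0,…,n−1}. -/
import Mathlib


open Matrix

/-- The mapping Θ(x,y,j)[λ] = Σ_{i=0}^{n−j−1} x_{[i+j]_n}·y_i + λ·Σ_{i=n−j}^{n−1} x_{[i+j]_n}·y_i. -/
def Theta {R : Type*} [CommRing R] (n : ℕ) (x y : ℕ → R) (j : ℕ) (l : R) : R :=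
  (∑ i ∈ Finset.range (n - j), x ((i + j) % n) * y i)
    + l * ∑ i ∈ Finset.Ico (n - j) n, x ((i + j) % n) * y i

/-- The λ-circulant matrix generated by `a`: the (i,j) entry is `a (j - i)` if `i ≤ j`
and `λ * a (n + j - i)` otherwise. -/
def circ {R : Type*} [CommRing R] (n : ℕ) (l : R) (a : ℕ → R) : Matrix (Fin n) (Fin n) R :=
  Matrix.of fun i j => if (i : ℕ) ≤ (j : ℕ) then a ((j : ℕ) - i) else l * a (n + j - i)

theorem stmt3 {R : Type*} [CommRing R] (σ : R ≃+* R) (hσ : Function.Involutive σ)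
    (n : ℕ) (hn : 1 ≤ n) (a b : ℕ → R) (l : R) (hl : l * σ l = 1) :
    circ n l b * ((circ n l a).map σ)ᵀ
      = circ n l (fun j => Theta n b (fun i => σ (a i)) j (σ l)) := by
  haveI : NeZero n := ⟨by omega⟩
  ext i k
  have hi : (i : ℕ) < n := i.isLt
  have hk : (k : ℕ) < n := k.isLt
  set G : ℕ → R := fun j =>
    (if (i : ℕ) ≤ j then b (j - (i : ℕ)) else l * b (n + j - (i : ℕ))) *
      σ (if (k : ℕ) ≤ j then a (j - (k : ℕ)) else l * a (n + j - (k : ℕ))) with hG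
  have e1 : ∀ j : Fin n,
      circ n l b i j * ((circ n l a).map σ)ᵀ j k = G (j : ℕ) := fun j => rfl
  rw [Matrix.mul_apply, Finset.sum_congr rfl fun j _ => e1 j]
  have e2 : (∑ j : Fin n, G (j : ℕ)) = ∑ m ∈ Finset.range n, G ((m + (k : ℕ)) % n) := by
    rw [← Fin.sum_univ_eq_sum_range (fun m => G ((m + (k : ℕ)) % n)) n]
    exact (Fintype.sum_equiv (Equiv.addRight k) _ _
      (fun m => by simp [Equiv.coe_addRight, Fin.add_def])).symm
  rw [e2]
  simp only [circ, Matrix.of_apply, Theta]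
  rcases le_or_gt (i : ℕ) (k : ℕ) with h | h
  · rw [if_pos h]
    rw [Finset.range_eq_Ico,
      ← Finset.sum_Ico_consecutive _ (Nat.zero_le (n - ((k : ℕ) - i))) (Nat.sub_le n _)]
    congr 1
    · rw [← Finset.range_eq_Ico]
      refine Finset.sum_congr rfl fun m hm => ?_
      rw [Finset.mem_range] at hm
      rcases lt_or_ge (m + (k : ℕ)) n with hc | hc
      · simp only [hG]
        rw [Nat.mod_eq_of_lt hc, if_pos (by omega), if_pos (by omega)]
        have e : m + (k : ℕ) - i = (m + ((k : ℕ) - i)) % n := by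
          rw [Nat.mod_eq_of_lt (by omega)]; omega
        have e' : m + (k : ℕ) - k = m := by omega
        rw [e, e']
      · have hmod : (m + (k : ℕ)) % n = m + k - n := by
          rw [Nat.mod_eq_sub_mod hc, Nat.mod_eq_of_lt (by omega)]
        simp only [hG]
        rw [hmod, if_neg (by omega), if_neg (by omega), _root_.map_mul]
        have e : n + (m + (k : ℕ) - n) - i = (m + ((k : ℕ) - i)) % n := by
          rw [Nat.mod_eq_of_lt (by omega)]; omega
        have e' : n + (m + (k : ℕ) - n) - k = m := by omega
        rw [e, e', mul_mul_mul_comm, hl, one_mul]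
    · rw [Finset.mul_sum]
      refine Finset.sum_congr rfl fun m hm => ?_
      rw [Finset.mem_Ico] at hm
      have hc : n ≤ m + (k : ℕ) := by omega
      have hmod : (m + (k : ℕ)) % n = m + k - n := by
        rw [Nat.mod_eq_sub_mod hc, Nat.mod_eq_of_lt (by omega)]
      simp only [hG]
      rw [hmod, if_pos (by omega), if_neg (by omega), _root_.map_mul]
      have e : m + (k : ℕ) - n - i = (m + ((k : ℕ) - i)) % n := by
        rw [Nat.mod_eq_sub_mod (by omega), Nat.mod_eq_of_lt (by omega)]; omega
      have e' : n + (m + (k : ℕ) - n) - k = m := by omega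
      rw [e, e']
      ring
  · rw [if_neg (by omega)]
    have hd : n - (n + (k : ℕ) - (i : ℕ)) = (i : ℕ) - k := by omega
    rw [hd, mul_add, ← mul_assoc, hl, one_mul]
    rw [Finset.range_eq_Ico,
      ← Finset.sum_Ico_consecutive _ (Nat.zero_le ((i : ℕ) - k)) (by omega : (i : ℕ) - k ≤ n)]
    congr 1
    · rw [← Finset.range_eq_Ico, Finset.mul_sum]
      refine Finset.sum_congr rfl fun m hm => ?_
      rw [Finset.mem_range] at hm
      simp only [hG]
      rw [Nat.mod_eq_of_lt (by omega), if_neg (by omega), if_pos (by omega)]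
      have e : n + (m + (k : ℕ)) - i = (m + (n + (k : ℕ) - i)) % n := by
        rw [Nat.mod_eq_of_lt (by omega)]; omega
      have e' : m + (k : ℕ) - k = m := by omega
      rw [e, e', mul_assoc]
    · refine Finset.sum_congr rfl fun m hm => ?_
      rw [Finset.mem_Ico] at hm
      rcases lt_or_ge (m + (k : ℕ)) n with hc | hc
      · simp only [hG]
        rw [Nat.mod_eq_of_lt hc, if_pos (by omega), if_pos (by omega)]
        have e : m + (k : ℕ) - i = (m + (n + (k : ℕ) - i)) % n := by
          rw [Nat.mod_eq_sub_mod (by omega), Nat.mod_eq_of_lt (by omega)]; omega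
        have e' : m + (k : ℕ) - k = m := by omega
        rw [e, e']
      · have hmod : (m + (k : ℕ)) % n = m + k - n := by
          rw [Nat.mod_eq_sub_mod hc, Nat.mod_eq_of_lt (by omega)]
        simp only [hG]
        rw [hmod, if_neg (by omega), if_neg (by omega), _root_.map_mul]
        have e : n + (m + (k : ℕ) - n) - i = (m + (n + (k : ℕ) - i)) % n := by
          rw [Nat.mod_eq_sub_mod (by omega), Nat.mod_eq_of_lt (by omega)]; omega
        have e' : n + (m + (k : ℕ) - n) - k = m := by omega
        rw [e, e', mul_mul_mul_comm, hl, one_mul]
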